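/- Let (Ω, F, P) be a probability space, g : [0,∞) × Ω → [0,∞) a jointly measurable process with g_t integrable for every t ≥ 0, and Z : Ω → [0,∞) a random variable. Let A = {Z = 0}. Assume: (a) almost surely, (1/T) ∫₀^T g_t dt → Z as T → ∞; (b) the family { (1/T) ∫₀^T g_t dt : T > 0 } is uniformly integrable; (c) for all s, t ≥ 0, E[g_s · 1_A] = E[g_t · 1_A]; (d) almost surely, sup_{T>0} ∫₀^T g_t dt > 0. Then P(A) = 0; that is, Z > 0 almost surely, and hence (1/T) ∫₀^T g_t dt converges almost surely to a strictly positive limit. -/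

import Mathlib

open Set Filter MeasureTheory
open scoped ENNReal NNReal

/-- if `(1/T)∫₀^T g_t dt → Z` a.s., the family `{(1/T)∫₀^T g_t dt : T > 0}`
is uniformly integrable, `E[g_s 1_A] = E[g_t 1_A]` for all `s,t ≥ 0` where `A = {Z = 0}`,
and a.s. `sup_{T>0} ∫₀^T g_t dt > 0`, then `P(A) = 0`, i.e. `Z > 0` a.s. -/
theorem stmt_12
    {Ω : Type*} [MeasurableSpace Ω] (P : Measure Ω) [IsProbabilityMeasure P]
    (g : ℝ → Ω → ℝ) (Z : Ω → ℝ)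
    (hgmeas : Measurable (Function.uncurry g))
    (hgnn : ∀ t ω, 0 ≤ g t ω)
    (hgint : ∀ t : ℝ, 0 ≤ t → Integrable (g t) P)
    (hZnn : ∀ ω, 0 ≤ Z ω)
    -- (a) a.s. convergence of the time averages to Z
    (ha : ∀ᵐ ω ∂P, Tendsto (fun T : ℝ => T⁻¹ * ∫ t in Ioc (0:ℝ) T, g t ω)
      atTop (nhds (Z ω)))
    -- (b) uniform integrability of the family of time averages
    (hb : UniformIntegrable
      (fun T : {T : ℝ // 0 < T} => fun ω => (T : ℝ)⁻¹ * ∫ t in Ioc (0:ℝ) (T : ℝ), g t ω)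
      1 P)
    -- (c) stationarity of E[g_t 1_A]
    (hc : ∀ s t : ℝ, 0 ≤ s → 0 ≤ t →
      ∫ ω in {ω | Z ω = 0}, g s ω ∂P = ∫ ω in {ω | Z ω = 0}, g t ω ∂P)
    -- (d) a.s. positivity of the supremum of the integrals
    (hd : ∀ᵐ ω ∂P, ∃ T > (0:ℝ), 0 < ∫ t in Ioc (0:ℝ) T, g t ω) :
    P {ω | Z ω = 0} = 0 := by
  set A : Set Ω := {ω | Z ω = 0} with hA_def
  set f : ℕ → Ω → ℝ := fun n ω => ((n:ℝ)+1)⁻¹ * ∫ t in Ioc (0:ℝ) ((n:ℝ)+1), g t ω with hf_def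
  have hTpos : ∀ n : ℕ, (0:ℝ) < (n:ℝ)+1 := fun n => by positivity
  have hfmeas : ∀ n, AEStronglyMeasurable (f n) P := fun n => hb.1 ⟨(n:ℝ)+1, hTpos n⟩
  have hseq : Tendsto (fun n : ℕ => (n:ℝ)+1) atTop atTop :=
    tendsto_atTop_add_const_right _ 1 tendsto_natCast_atTop_atTop
  have hfZ : ∀ᵐ ω ∂P, Tendsto (fun n => f n ω) atTop (nhds (Z ω)) :=
    ha.mono fun ω hω => hω.comp hseq
  obtain ⟨C, hC⟩ := hb.2.2
  have hfint : ∀ n, Integrable (f n) P := fun n =>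
    memLp_one_iff_integrable.mp
      ⟨hfmeas n, lt_of_le_of_lt (hC ⟨(n:ℝ)+1, hTpos n⟩) ENNReal.coe_lt_top⟩
  have hZm : AEStronglyMeasurable Z P := aestronglyMeasurable_of_tendsto_ae atTop hfmeas hfZ
  have hZmem : MemLp Z 1 P := by
    refine ⟨hZm, ?_⟩
    rw [eLpNorm_one_eq_lintegral_enorm]
    simp only [enorm_eq_nnnorm]
    have h1 : ∫⁻ ω, (‖Z ω‖₊ : ℝ≥0∞) ∂P
        = ∫⁻ ω, liminf (fun n => (‖f n ω‖₊ : ℝ≥0∞)) atTop ∂P := by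
      refine lintegral_congr_ae (hfZ.mono fun ω hω => ?_)
      have : Tendsto (fun n => (‖f n ω‖₊ : ℝ≥0∞)) atTop (nhds (‖Z ω‖₊ : ℝ≥0∞)) := by
        exact (ENNReal.tendsto_coe.mpr (hω.nnnorm))
      exact (this.liminf_eq).symm
    rw [h1]
    refine lt_of_le_of_lt (lintegral_liminf_le' fun n => (hfmeas n).enorm) ?_
    have h2 : liminf (fun n : ℕ => ∫⁻ ω, (‖f n ω‖₊ : ℝ≥0∞) ∂P) atTop ≤ (C : ℝ≥0∞) := by
      have hle : ∀ n : ℕ, ∫⁻ ω, (‖f n ω‖₊ : ℝ≥0∞) ∂P ≤ (C : ℝ≥0∞) := fun n => by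
        simp only [← enorm_eq_nnnorm]
        rw [← eLpNorm_one_eq_lintegral_enorm]
        exact hC ⟨(n:ℝ)+1, hTpos n⟩
      calc liminf (fun n : ℕ => ∫⁻ ω, (‖f n ω‖₊ : ℝ≥0∞) ∂P) atTop
          ≤ liminf (fun _ : ℕ => (C : ℝ≥0∞)) atTop :=
            liminf_le_liminf (Eventually.of_forall hle)
        _ = (C : ℝ≥0∞) := liminf_const _
    exact lt_of_le_of_lt h2 ENNReal.coe_lt_top
  have hui : UnifIntegrable f 1 P := by
    intro ε hε
    obtain ⟨δ, hδ, h⟩ := hb.2.1 hε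
    exact ⟨δ, hδ, fun n s hs hμs => h ⟨(n:ℝ)+1, hTpos n⟩ s hs hμs⟩
  have hL1 : Tendsto (fun n => eLpNorm (f n - Z) 1 P) atTop (nhds 0) :=
    tendsto_Lp_finite_of_tendsto_ae le_rfl ENNReal.one_ne_top hfmeas hZmem hui hfZ
  have hZint : Integrable Z P := memLp_one_iff_integrable.mp hZmem
  have hAconv : Tendsto (fun n => ∫ ω in A, f n ω ∂P) atTop (nhds (∫ ω in A, Z ω ∂P)) :=
    tendsto_setIntegral_of_L1' Z hZint.aestronglyMeasurable (Eventually.of_forall hfint) hL1 A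
  have hAnull : NullMeasurableSet A P :=
    hZm.aemeasurable.nullMeasurable (measurableSet_singleton 0)
  have hZA : ∫ ω in A, Z ω ∂P = 0 := by
    have h0 : Z =ᵐ[P.restrict A] (fun _ => (0:ℝ)) :=
      (ae_restrict_mem₀ hAnull).mono fun ω hω => hω
    rw [integral_congr_ae h0, integral_zero]
  set c : ℝ := ∫ ω in A, g 0 ω ∂P with hc_def
  have key : ∀ n : ℕ, ∫ ω in A, f n ω ∂P = c := by
    intro n
    set T : ℝ := (n:ℝ)+1 with hT_def
    have hT : 0 < T := hTpos n
    have hgm : AEStronglyMeasurable (Function.uncurry g)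
        ((volume.restrict (Ioc (0:ℝ) T)).prod (P.restrict A)) :=
      hgmeas.aestronglyMeasurable
    have hnormconst : ∀ᵐ t ∂(volume.restrict (Ioc (0:ℝ) T)),
        ∫ ω in A, ‖g t ω‖ ∂P = c := by
      filter_upwards [ae_restrict_mem measurableSet_Ioc] with t ht
      have hn : ∀ ω, ‖g t ω‖ = g t ω := fun ω => Real.norm_of_nonneg (hgnn t ω)
      simp_rw [hn]
      exact hc t 0 ht.1.le le_rfl
    have hint_prod : Integrable (Function.uncurry g)
        ((volume.restrict (Ioc (0:ℝ) T)).prod (P.restrict A)) := by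
      rw [integrable_prod_iff hgm]
      constructor
      · filter_upwards [ae_restrict_mem measurableSet_Ioc] with t ht
        exact (hgint t ht.1.le).restrict
      · exact (integrable_const c).congr (hnormconst.mono fun t ht => ht.symm)
    have hswap := integral_integral_swap hint_prod
    have hLHS : (∫ t in Ioc (0:ℝ) T, (∫ ω in A, g t ω ∂P)) = T * c := by
      have hcongr : (fun t => ∫ ω in A, g t ω ∂P) =ᵐ[volume.restrict (Ioc (0:ℝ) T)]
          (fun _ => c) := by
        filter_upwards [ae_restrict_mem measurableSet_Ioc] with t ht
        exact hc t 0 ht.1.le le_rfl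
      rw [integral_congr_ae hcongr, setIntegral_const, Real.volume_real_Ioc_of_le hT.le, sub_zero,
        smul_eq_mul]
    calc ∫ ω in A, f n ω ∂P = T⁻¹ * ∫ ω in A, (∫ t in Ioc (0:ℝ) T, g t ω) ∂P := by
          rw [← integral_const_mul]
      _ = T⁻¹ * (T * c) := by rw [← hswap, hLHS]
      _ = c := by field_simp
  have hc0 : c = 0 := by
    have h1 : Tendsto (fun _ : ℕ => c) atTop (nhds (0:ℝ)) := by
      rw [← hZA]; exact hAconv.congr key
    exact tendsto_nhds_unique tendsto_const_nhds h1
  have hint0 : ∀ t : ℝ, 0 ≤ t → ∫ ω in A, g t ω ∂P = 0 := fun t ht =>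
    (hc t 0 ht le_rfl).trans (hc_def ▸ hc0)
  have hkey2 : ∀ n : ℕ, ∀ᵐ ω ∂(P.restrict A),
      ∫⁻ t in Ioc (0:ℝ) ((n:ℝ)+1), ENNReal.ofReal (g t ω) = 0 := by
    intro n
    have hmprod : Measurable (Function.uncurry fun (ω : Ω) (t : ℝ) => ENNReal.ofReal (g t ω)) :=
      ENNReal.measurable_ofReal.comp (hgmeas.comp measurable_swap)
    have hswap2 := lintegral_lintegral_swap
      (μ := P.restrict A) (ν := volume.restrict (Ioc (0:ℝ) ((n:ℝ)+1)))
      (f := fun ω t => ENNReal.ofReal (g t ω)) hmprod.aemeasurable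
    have hRHS : ∫⁻ t in Ioc (0:ℝ) ((n:ℝ)+1),
        (∫⁻ ω in A, ENNReal.ofReal (g t ω) ∂P) = 0 := by
      have hcongr : (fun t => ∫⁻ ω in A, ENNReal.ofReal (g t ω) ∂P)
          =ᵐ[volume.restrict (Ioc (0:ℝ) ((n:ℝ)+1))] (fun _ => (0:ℝ≥0∞)) := by
        filter_upwards [ae_restrict_mem measurableSet_Ioc] with t ht
        rw [← ofReal_integral_eq_lintegral_ofReal ((hgint t ht.1.le).restrict)
          (Eventually.of_forall fun ω => hgnn t ω), hint0 t ht.1.le, ENNReal.ofReal_zero]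
      rw [lintegral_congr_ae hcongr, lintegral_zero]
    have htot : ∫⁻ ω in A, (∫⁻ t in Ioc (0:ℝ) ((n:ℝ)+1), ENNReal.ofReal (g t ω)) ∂P = 0 := by
      rw [hswap2]; exact hRHS
    have hmeasω : Measurable fun ω => ∫⁻ t in Ioc (0:ℝ) ((n:ℝ)+1), ENNReal.ofReal (g t ω) :=
      Measurable.lintegral_prod_right hmprod
    exact (lintegral_eq_zero_iff hmeasω).mp htot
  have hall : ∀ᵐ ω ∂(P.restrict A), ∀ n : ℕ,
      ∫⁻ t in Ioc (0:ℝ) ((n:ℝ)+1), ENNReal.ofReal (g t ω) = 0 := ae_all_iff.mpr hkey2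
  have hd' : ∀ᵐ ω ∂(P.restrict A), ∃ T > (0:ℝ), 0 < ∫ t in Ioc (0:ℝ) T, g t ω :=
    hd.filter_mono (ae_mono Measure.restrict_le_self)
  have hfalse : ∀ᵐ _ω ∂(P.restrict A), False := by
    filter_upwards [hall, hd'] with ω h1 h2
    obtain ⟨T, hT, hpos⟩ := h2
    obtain ⟨n, hn⟩ := exists_nat_ge T
    have hsub : Ioc (0:ℝ) T ⊆ Ioc (0:ℝ) ((n:ℝ)+1) :=
      Ioc_subset_Ioc le_rfl (hn.trans (by linarith))
    have h0 : ∫⁻ t in Ioc (0:ℝ) T, ENNReal.ofReal (g t ω) = 0 :=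
      le_antisymm ((lintegral_mono_set hsub).trans (h1 n).le) zero_le
    have hmt : AEMeasurable (fun t => ENNReal.ofReal (g t ω))
        (volume.restrict (Ioc (0:ℝ) T)) :=
      (ENNReal.measurable_ofReal.comp
        (hgmeas.comp (measurable_id.prodMk measurable_const))).aemeasurable
    have hae : (fun t => g t ω) =ᵐ[volume.restrict (Ioc (0:ℝ) T)] (fun _ => (0:ℝ)) := by
      filter_upwards [(lintegral_eq_zero_iff' hmt).mp h0] with t ht
      have ht0 : ENNReal.ofReal (g t ω) = 0 := ht
      have := ENNReal.ofReal_eq_zero.mp ht0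
      linarith [hgnn t ω]
    have : ∫ t in Ioc (0:ℝ) T, g t ω = 0 := by
      rw [integral_congr_ae hae, integral_zero]
    linarith
  have := ae_iff.mp hfalse
  simp only [not_false_eq_true, setOf_true] at this
  rw [← Measure.restrict_apply_univ A]
  exact this
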